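/- arXiv:1604.08179 — 3 statements merged into one kernel-verified Lean document; each statement's English description precedes it below -/
import Mathlib

section
/- Assume 1 < c_A ≤ c_B and c_A < A. Fix j* ∈ T_A and let G* be the graph on V in which T_A induces a complete graph and every node of T_B is adjacent to j* and to no other node. Then G* is pairwise stable. -/
open SimpleGraph Classical
open scoped ENNReal

noncomputable section

variable {V : Type*} [Fintype V] [DecidableEq V]

/-- The degree of node `i` in `G`. -/
def degE (G : SimpleGraph V) (i : V) : ℕ := (G.neighborSet i).ncard

/-- The hop distance between `i` and `j`, with value `+∞` for unreachable pairs. -/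
def dE (G : SimpleGraph V) (i j : V) : ℝ≥0∞ :=
  if G.Reachable i j then (G.dist i j : ℝ≥0∞) else ⊤

/-- Basic model: the cost of node `i`, where a node of type A (in `TA`) pays link
cost `cA`, a node of type B (not in `TA`) pays `cB`, distances to type-A nodes are
weighted by `A` and to type-B nodes by `1`. -/
def cost (TA : Finset V) (A cA cB : ℝ) (G : SimpleGraph V) (i : V) : ℝ≥0∞ :=
  (degE G i : ℝ≥0∞) * ENNReal.ofReal (if i ∈ TA then cA else cB)
    + ENNReal.ofReal A * ∑ j ∈ TA, dE G i j
    + ∑ j ∈ TAᶜ, dE G i j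

/-- `G` with the edge `ij` removed. -/
def delE (G : SimpleGraph V) (i j : V) : SimpleGraph V := G.deleteEdges {s(i, j)}

/-- `G` with the edge `ij` added. -/
def addE (G : SimpleGraph V) (i j : V) : SimpleGraph V := G ⊔ edge i j

/-- Pairwise stability: removing any present edge strictly increases the cost of both
endpoints, and adding any absent edge strictly increases the cost of at least one
endpoint. -/
def PairwiseStable (TA : Finset V) (A cA cB : ℝ) (G : SimpleGraph V) : Prop :=
  (∀ i j : V, G.Adj i j →
    cost TA A cA cB G i < cost TA A cA cB (delE G i j) i ∧
    cost TA A cA cB G j < cost TA A cA cB (delE G i j) j) ∧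
  (∀ i j : V, i ≠ j → ¬ G.Adj i j →
    cost TA A cA cB G i < cost TA A cA cB (addE G i j) i ∨
    cost TA A cA cB G j < cost TA A cA cB (addE G i j) j)

/-- The social cost: the sum of the individual costs. -/
def socialCost (TA : Finset V) (A cA cB : ℝ) (G : SimpleGraph V) : ℝ≥0∞ :=
  ∑ i, cost TA A cA cB G i

/-- The graph in which `T_A` induces a complete graph and every node of `T_B` is
adjacent to `jstar ∈ T_A` and to no other node. -/
def Gstar (TA : Finset V) (jstar : V) : SimpleGraph V :=
  SimpleGraph.fromRel (fun i j => (i ∈ TA ∧ j ∈ TA) ∨ (i ∉ TA ∧ j = jstar))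

/-- The graph in which `T_A` induces a complete graph, every node of `T_B` is adjacent
to every node of `T_A`, and no two nodes of `T_B` are adjacent. -/
def Gss (TA : Finset V) : SimpleGraph V :=
  SimpleGraph.fromRel (fun i j => i ∈ TA ∨ j ∈ TA)

/-! ### Auxiliary lemmas -/

lemma dE_self (G : SimpleGraph V) (i : V) : dE G i i = 0 := by
  unfold dE
  rw [if_pos (Reachable.refl i), SimpleGraph.dist_self]
  norm_num

lemma dE_ne_top_of_reachable {G : SimpleGraph V} {i j : V} (h : G.Reachable i j) :
    dE G i j ≠ ⊤ := by
  simp [dE, h]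

lemma one_le_dE (G : SimpleGraph V) {i j : V} (h : i ≠ j) : 1 ≤ dE G i j := by
  unfold dE
  split
  · rename_i hr
    exact_mod_cast Nat.one_le_cast.mpr (hr.pos_dist_of_ne h)
  · exact le_top

lemma dE_eq_one {G : SimpleGraph V} {i j : V} (h : G.Adj i j) : dE G i j = 1 := by
  unfold dE
  rw [if_pos h.reachable, SimpleGraph.dist_eq_one_iff_adj.mpr h]
  norm_num

lemma two_le_dE (G : SimpleGraph V) {i j : V} (h : i ≠ j) (h2 : ¬ G.Adj i j) :
    2 ≤ dE G i j := by
  unfold dE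
  split
  · rename_i hr
    have h0 : G.dist i j ≠ 0 := (hr.pos_dist_of_ne h).ne'
    have h1 : G.dist i j ≠ 1 := fun hh => h2 (SimpleGraph.dist_eq_one_iff_adj.mp hh)
    have : 2 ≤ G.dist i j := by omega
    exact_mod_cast this
  · exact le_top

lemma dE_le_two {G : SimpleGraph V} {i m j : V} (h1 : G.Adj i m) (h2 : G.Adj m j) :
    dE G i j ≤ 2 := by
  by_cases hij : i = j
  · subst hij; rw [dE_self]; exact zero_le
  · have hr : G.Reachable i j := ⟨Walk.cons h1 (Walk.cons h2 Walk.nil)⟩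
    unfold dE
    rw [if_pos hr]
    have hle := SimpleGraph.dist_le (Walk.cons h1 (Walk.cons h2 Walk.nil))
    simp only [Walk.length_cons, Walk.length_nil] at hle
    exact_mod_cast hle

lemma dE_anti {G H : SimpleGraph V} (hle : H ≤ G) (i j : V) : dE G i j ≤ dE H i j := by
  unfold dE
  by_cases hr : H.Reachable i j
  · rw [if_pos hr, if_pos (hr.mono hle)]
    obtain ⟨p, hp⟩ := hr.exists_walk_length_eq_dist
    have h2 := SimpleGraph.dist_le (p.mapLe hle)
    rw [Walk.mapLe, Walk.length_map, hp] at h2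
    exact_mod_cast h2
  · rw [if_neg hr]; exact le_top

lemma Gstar_adj_iff {TA : Finset V} {jstar : V} {i j : V} :
    (Gstar TA jstar).Adj i j ↔ i ≠ j ∧
      ((i ∈ TA ∧ j ∈ TA) ∨ (i ∉ TA ∧ j = jstar) ∨ (j ∉ TA ∧ i = jstar)) := by
  simp only [Gstar, fromRel_adj]
  tauto

lemma Gstar_reach (TA : Finset V) {jstar : V} (hj : jstar ∈ TA) (i j : V) :
    (Gstar TA jstar).Reachable i j := by
  have key : ∀ k, (Gstar TA jstar).Reachable k jstar := by
    intro k
    by_cases hk : k = jstar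
    · subst hk; exact Reachable.refl _
    · by_cases hkA : k ∈ TA
      · exact (Gstar_adj_iff.mpr ⟨hk, Or.inl ⟨hkA, hj⟩⟩).reachable
      · exact (Gstar_adj_iff.mpr ⟨hk, Or.inr (Or.inl ⟨hkA, rfl⟩)⟩).reachable
  exact (key i).trans (key j).symm

lemma cost_Gstar_ne_top (TA : Finset V) (A cA cB : ℝ) {jstar : V} (hj : jstar ∈ TA)
    (i : V) : cost TA A cA cB (Gstar TA jstar) i ≠ ⊤ := by
  have hd : ∀ j, dE (Gstar TA jstar) i j ≠ ⊤ := fun j =>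
    dE_ne_top_of_reachable (Gstar_reach TA hj i j)
  unfold cost
  refine ENNReal.add_ne_top.mpr ⟨ENNReal.add_ne_top.mpr ⟨?_, ?_⟩, ?_⟩
  · exact ENNReal.mul_ne_top (ENNReal.natCast_ne_top _) ENNReal.ofReal_ne_top
  · exact ENNReal.mul_ne_top ENNReal.ofReal_ne_top
      (ENNReal.sum_ne_top.mpr fun a _ => hd a)
  · exact ENNReal.sum_ne_top.mpr fun a _ => hd a

lemma key_lt {x y : ℝ≥0∞} {a b : ℝ} (hx : x ≠ ⊤) (h0 : 0 ≤ a) (hab : a < b)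
    (h : x + ENNReal.ofReal b ≤ y + ENNReal.ofReal a) : x < y := by
  have hb : ENNReal.ofReal b = ENNReal.ofReal (b - a) + ENNReal.ofReal a := by
    rw [← ENNReal.ofReal_add (by linarith) h0]
    ring_nf
  rw [hb, ← add_assoc] at h
  have h2 : x + ENNReal.ofReal (b - a) ≤ y :=
    (ENNReal.add_le_add_iff_right ENNReal.ofReal_ne_top).mp h
  calc x < x + ENNReal.ofReal (b - a) := by
        refine ENNReal.lt_add_right hx ?_
        simp only [ne_eq, ENNReal.ofReal_eq_zero, not_le]
        linarith
    _ ≤ y := h2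

lemma delE_comm (G : SimpleGraph V) (i j : V) : delE G i j = delE G j i := by
  unfold delE
  rw [Sym2.eq_swap]

lemma addE_comm (G : SimpleGraph V) (i j : V) : addE G i j = addE G j i := by
  unfold addE
  congr 1
  ext a b
  rw [edge_adj, edge_adj]
  tauto

lemma degE_delE {G : SimpleGraph V} {i j : V} (h : G.Adj i j) :
    degE G i = degE (delE G i j) i + 1 := by
  have hset : (delE G i j).neighborSet i = G.neighborSet i \ {j} := by
    ext k
    simp only [delE, mem_neighborSet, deleteEdges_adj, Set.mem_singleton_iff,
      Set.mem_diff, Sym2.congr_right]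
  unfold degE
  rw [hset]
  exact (Set.ncard_diff_singleton_add_one h (Set.toFinite _)).symm

lemma degE_addE {G : SimpleGraph V} {i j : V} (hne : i ≠ j) (h : ¬ G.Adj i j) :
    degE (addE G i j) i = degE G i + 1 := by
  have hset : (addE G i j).neighborSet i = insert j (G.neighborSet i) := by
    ext k
    simp only [addE, mem_neighborSet, sup_adj, edge_adj, Set.mem_insert_iff]
    aesop
  have hnot : j ∉ G.neighborSet i := fun hmem => h hmem
  unfold degE
  rw [hset, Set.ncard_insert_of_notMem hnot (Set.toFinite _)]

lemma no_reach_of_no_adj {G : SimpleGraph V} {b j : V} (h : ∀ k, ¬ G.Adj b k)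
    (hne : b ≠ j) : ¬ G.Reachable b j := by
  rintro ⟨w⟩
  cases w with
  | nil => exact hne rfl
  | cons h' _ => exact h _ h'

lemma cost_eq_top_A {TA : Finset V} {A cA cB : ℝ} {G : SimpleGraph V} {i j : V}
    (hA : 0 < A) (hj : j ∈ TA) (hd : dE G i j = ⊤) : cost TA A cA cB G i = ⊤ := by
  unfold cost
  have hsum : ∑ k ∈ TA, dE G i k = ⊤ := ENNReal.sum_eq_top.mpr ⟨j, hj, hd⟩
  rw [hsum, ENNReal.mul_top (by simp only [ne_eq, ENNReal.ofReal_eq_zero, not_le]; linarith)]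
  simp

lemma cost_eq_top_B {TA : Finset V} {A cA cB : ℝ} {G : SimpleGraph V} {i j : V}
    (hj : j ∉ TA) (hd : dE G i j = ⊤) : cost TA A cA cB G i = ⊤ := by
  unfold cost
  have hsum : ∑ k ∈ TAᶜ, dE G i k = ⊤ :=
    ENNReal.sum_eq_top.mpr ⟨j, Finset.mem_compl.mpr hj, hd⟩
  rw [hsum]
  simp

lemma Gstar_adj_of_B {TA : Finset V} {jstar : V} (hjs : jstar ∈ TA) {b k : V}
    (hb : b ∉ TA) (h : (Gstar TA jstar).Adj b k) : k = jstar := by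
  rw [Gstar_adj_iff] at h
  obtain ⟨-, ⟨hbA, -⟩ | ⟨-, rfl⟩ | ⟨-, rfl⟩⟩ := h
  · exact absurd hbA hb
  · rfl
  · exact absurd hjs hb

lemma dE_comm (G : SimpleGraph V) (i j : V) : dE G i j = dE G j i := by
  unfold dE
  exact if_congr reachable_comm (by rw [SimpleGraph.dist_comm]) rfl

lemma Gstar_not_adj_AB {TA : Finset V} {jstar i b : V} (hi : i ∈ TA) (hij : i ≠ jstar)
    (hb : b ∉ TA) : ¬ (Gstar TA jstar).Adj i b := by
  rw [Gstar_adj_iff]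
  rintro ⟨-, ⟨-, h⟩ | ⟨h, -⟩ | ⟨-, h⟩⟩
  · exact hb h
  · exact h hi
  · exact hij h

lemma Gstar_not_adj_BB {TA : Finset V} {jstar i b : V} (hjs : jstar ∈ TA) (hi : i ∉ TA)
    (hb : b ∉ TA) : ¬ (Gstar TA jstar).Adj i b := by
  rw [Gstar_adj_iff]
  rintro ⟨-, ⟨h, -⟩ | ⟨-, h⟩ | ⟨-, h⟩⟩
  · exact hi h
  · exact hb (h ▸ hjs)
  · exact hi (h ▸ hjs)

lemma Gstar_adj_hub_B {TA : Finset V} {jstar b : V} (hjs : jstar ∈ TA) (hb : b ∉ TA) :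
    (Gstar TA jstar).Adj jstar b :=
  Gstar_adj_iff.mpr ⟨fun h => hb (h ▸ hjs), Or.inr (Or.inr ⟨hb, rfl⟩)⟩

lemma dE_Gstar_AB {TA : Finset V} {jstar i b : V} (hjs : jstar ∈ TA) (hi : i ∈ TA)
    (hij : i ≠ jstar) (hb : b ∉ TA) : dE (Gstar TA jstar) i b = 2 := by
  have hadj1 : (Gstar TA jstar).Adj i jstar := Gstar_adj_iff.mpr ⟨hij, Or.inl ⟨hi, hjs⟩⟩
  refine le_antisymm (dE_le_two hadj1 (Gstar_adj_hub_B hjs hb)) ?_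
  exact two_le_dE _ (fun h => hb (h ▸ hi)) (Gstar_not_adj_AB hi hij hb)

lemma dE_Gstar_BB {TA : Finset V} {jstar i b : V} (hjs : jstar ∈ TA) (hi : i ∉ TA)
    (hb : b ∉ TA) (hne : i ≠ b) : dE (Gstar TA jstar) i b = 2 := by
  have hadj1 : (Gstar TA jstar).Adj i jstar :=
    Gstar_adj_iff.mpr ⟨fun h => hi (h ▸ hjs), Or.inr (Or.inl ⟨hi, rfl⟩)⟩
  refine le_antisymm (dE_le_two hadj1 (Gstar_adj_hub_B hjs hb)) ?_
  exact two_le_dE _ hne (Gstar_not_adj_BB hjs hi hb)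

lemma lemD1 {TA : Finset V} {A cA cB : ℝ} (hcA : 1 < cA) (hcAA : cA < A)
    {jstar : V} (hjs : jstar ∈ TA) {i j : V} (hi : i ∈ TA) (hj : j ∈ TA) (hne : i ≠ j) :
    cost TA A cA cB (Gstar TA jstar) i <
      cost TA A cA cB (delE (Gstar TA jstar) i j) i := by
  set G := Gstar TA jstar with hG
  set G' := delE G i j with hG'
  have hadj : G.Adj i j := Gstar_adj_iff.mpr ⟨hne, Or.inl ⟨hi, hj⟩⟩
  have hle : G' ≤ G := SimpleGraph.deleteEdges_le _
  have hnadj : ¬ G'.Adj i j := by simp [hG', delE]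
  apply key_lt (cost_Gstar_ne_top TA A cA cB hjs i) (by linarith) hcAA
  unfold cost
  simp only [hi, if_true]
  have hdeg : (degE G i : ℝ≥0∞) = (degE G' i : ℝ≥0∞) + 1 := by
    exact_mod_cast congrArg (Nat.cast (R := ℝ≥0∞)) (degE_delE hadj)
  have hsumA : (∑ k ∈ TA, dE G i k) + 1 ≤ ∑ k ∈ TA, dE G' i k := by
    rw [← Finset.add_sum_erase TA (fun k => dE G i k) hj,
      ← Finset.add_sum_erase TA (fun k => dE G' i k) hj]
    have h1 : dE G i j = 1 := dE_eq_one hadj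
    have h2 : (2:ℝ≥0∞) ≤ dE G' i j := two_le_dE _ hne hnadj
    calc dE G i j + ∑ k ∈ TA.erase j, dE G i k + 1
        = 2 + ∑ k ∈ TA.erase j, dE G i k := by rw [h1]; ring
      _ ≤ dE G' i j + ∑ k ∈ TA.erase j, dE G' i k := by
          gcongr with k hk
          exact dE_anti hle i k
  have hsumB : ∑ k ∈ TAᶜ, dE G i k ≤ ∑ k ∈ TAᶜ, dE G' i k :=
    Finset.sum_le_sum fun k _ => dE_anti hle i k
  calc (degE G i : ℝ≥0∞) * ENNReal.ofReal cA + ENNReal.ofReal A * ∑ k ∈ TA, dE G i k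
        + ∑ k ∈ TAᶜ, dE G i k + ENNReal.ofReal A
      = (degE G' i : ℝ≥0∞) * ENNReal.ofReal cA
        + ENNReal.ofReal A * ((∑ k ∈ TA, dE G i k) + 1)
        + ∑ k ∈ TAᶜ, dE G i k + ENNReal.ofReal cA := by rw [hdeg]; ring
    _ ≤ (degE G' i : ℝ≥0∞) * ENNReal.ofReal cA
        + ENNReal.ofReal A * ∑ k ∈ TA, dE G' i k
        + ∑ k ∈ TAᶜ, dE G' i k + ENNReal.ofReal cA := by gcongr

lemma lemD2 {TA : Finset V} {A cA cB : ℝ} (hA : 1 < A)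
    {jstar : V} (hjs : jstar ∈ TA) {b : V} (hb : b ∉ TA) :
    cost TA A cA cB (delE (Gstar TA jstar) jstar b) jstar = ⊤ ∧
    cost TA A cA cB (delE (Gstar TA jstar) jstar b) b = ⊤ := by
  set G' := delE (Gstar TA jstar) jstar b with hG'
  have hnb : b ≠ jstar := fun h => hb (h ▸ hjs)
  have hno : ∀ k, ¬ G'.Adj b k := by
    intro k hk
    rw [hG', delE, deleteEdges_adj] at hk
    obtain ⟨hadj, hmem⟩ := hk
    have hk2 := Gstar_adj_of_B hjs hb hadj
    subst hk2
    exact hmem (by rw [Sym2.eq_swap]; exact Set.mem_singleton _)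
  have hr : ¬ G'.Reachable b jstar := no_reach_of_no_adj hno hnb
  constructor
  · apply cost_eq_top_B hb
    unfold dE
    rw [if_neg (fun h => hr h.symm)]
  · apply cost_eq_top_A (by linarith) hjs
    unfold dE
    rw [if_neg hr]

lemma lemA1 {TA : Finset V} {A cA cB : ℝ} (hcA : 1 < cA)
    {jstar : V} (hjs : jstar ∈ TA) {i j : V} (hi : i ∈ TA) (hij : i ≠ jstar)
    (hb : j ∉ TA) :
    cost TA A cA cB (Gstar TA jstar) i <
      cost TA A cA cB (addE (Gstar TA jstar) i j) i := by
  set G := Gstar TA jstar with hG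
  set G' := addE G i j with hG'
  have hne : i ≠ j := fun h => hb (h ▸ hi)
  have hnadjG : ¬ G.Adj i j := Gstar_not_adj_AB hi hij hb
  apply key_lt (cost_Gstar_ne_top TA A cA cB hjs i) zero_le_one hcA
  unfold cost
  simp only [hi, if_true]
  have hdeg : (degE G' i : ℝ≥0∞) = (degE G i : ℝ≥0∞) + 1 := by
    exact_mod_cast congrArg (Nat.cast (R := ℝ≥0∞)) (degE_addE hne hnadjG)
  have hsumA : ∑ k ∈ TA, dE G i k ≤ ∑ k ∈ TA, dE G' i k := by
    refine Finset.sum_le_sum fun k hk => ?_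
    by_cases hki : k = i
    · subst hki; rw [dE_self, dE_self]
    · have h1 : dE G i k = 1 :=
        dE_eq_one (Gstar_adj_iff.mpr ⟨fun h => hki h.symm, Or.inl ⟨hi, hk⟩⟩)
      rw [h1]
      exact one_le_dE _ fun h => hki h.symm
  have hjc : j ∈ TAᶜ := Finset.mem_compl.mpr hb
  have hsumB : ∑ k ∈ TAᶜ, dE G i k ≤ (∑ k ∈ TAᶜ, dE G' i k) + 1 := by
    rw [← Finset.add_sum_erase TAᶜ (fun k => dE G i k) hjc,
      ← Finset.add_sum_erase TAᶜ (fun k => dE G' i k) hjc]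
    have h1 : dE G i j = 2 := dE_Gstar_AB hjs hi hij hb
    have h2 : (1:ℝ≥0∞) ≤ dE G' i j := one_le_dE _ hne
    have h3 : ∀ k ∈ TAᶜ.erase j, dE G i k ≤ dE G' i k := by
      intro k hk
      obtain ⟨hkj, hkc⟩ := Finset.mem_erase.mp hk
      have hkB : k ∉ TA := Finset.mem_compl.mp hkc
      have hik : i ≠ k := fun h => hkB (h ▸ hi)
      rw [dE_Gstar_AB hjs hi hij hkB]
      refine two_le_dE _ hik ?_
      rw [hG', addE, sup_adj, edge_adj]
      rintro (hGa | ⟨⟨-, h5⟩ | ⟨h5, -⟩, -⟩)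
      · exact Gstar_not_adj_AB hi hij hkB hGa
      · exact hkj h5
      · exact hne h5
    calc dE G i j + ∑ k ∈ TAᶜ.erase j, dE G i k
        = 1 + ∑ k ∈ TAᶜ.erase j, dE G i k + 1 := by rw [h1]; ring
      _ ≤ dE G' i j + ∑ k ∈ TAᶜ.erase j, dE G' i k + 1 := by
          gcongr with k hk
          exact h3 k hk
  calc (degE G i : ℝ≥0∞) * ENNReal.ofReal cA + ENNReal.ofReal A * ∑ k ∈ TA, dE G i k
        + ∑ k ∈ TAᶜ, dE G i k + ENNReal.ofReal cA
      ≤ (degE G i : ℝ≥0∞) * ENNReal.ofReal cA + ENNReal.ofReal A * ∑ k ∈ TA, dE G' i k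
        + ((∑ k ∈ TAᶜ, dE G' i k) + 1) + ENNReal.ofReal cA := by gcongr
    _ = (degE G' i : ℝ≥0∞) * ENNReal.ofReal cA + ENNReal.ofReal A * ∑ k ∈ TA, dE G' i k
        + ∑ k ∈ TAᶜ, dE G' i k + ENNReal.ofReal 1 := by
        rw [hdeg, ENNReal.ofReal_one]; ring

lemma lemA2 {TA : Finset V} {A cA cB : ℝ} (hcA : 1 < cA) (hAB : cA ≤ cB)
    {jstar : V} (hjs : jstar ∈ TA) {i j : V} (hi : i ∉ TA) (hb : j ∉ TA)
    (hne : i ≠ j) :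
    cost TA A cA cB (Gstar TA jstar) i <
      cost TA A cA cB (addE (Gstar TA jstar) i j) i := by
  set G := Gstar TA jstar with hG
  set G' := addE G i j with hG'
  have hnadjG : ¬ G.Adj i j := Gstar_not_adj_BB hjs hi hb
  have hijs : i ≠ jstar := fun h => hi (h ▸ hjs)
  apply key_lt (cost_Gstar_ne_top TA A cA cB hjs i) zero_le_one (by linarith)
  unfold cost
  simp only [hi, if_false]
  have hdeg : (degE G' i : ℝ≥0∞) = (degE G i : ℝ≥0∞) + 1 := by
    exact_mod_cast congrArg (Nat.cast (R := ℝ≥0∞)) (degE_addE hne hnadjG)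
  have hsumA : ∑ k ∈ TA, dE G i k ≤ ∑ k ∈ TA, dE G' i k := by
    refine Finset.sum_le_sum fun k hk => ?_
    by_cases hkjs : k = jstar
    · subst hkjs
      rw [dE_eq_one (Gstar_adj_iff.mpr ⟨hijs, Or.inr (Or.inl ⟨hi, rfl⟩)⟩)]
      exact one_le_dE _ hijs
    · have hik : i ≠ k := fun h => hi (h ▸ hk)
      rw [dE_comm G, dE_Gstar_AB hjs hk hkjs hi, dE_comm G']
      refine two_le_dE _ (Ne.symm hik) ?_
      rw [hG', addE, sup_adj, edge_adj]
      rintro (hGa | ⟨⟨-, h5⟩ | ⟨h5, -⟩, -⟩)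
      · exact Gstar_not_adj_AB hk hkjs hi hGa
      · exact hne h5
      · exact hb (h5 ▸ hk)
  have hjc : j ∈ TAᶜ := Finset.mem_compl.mpr hb
  have hsumB : ∑ k ∈ TAᶜ, dE G i k ≤ (∑ k ∈ TAᶜ, dE G' i k) + 1 := by
    rw [← Finset.add_sum_erase TAᶜ (fun k => dE G i k) hjc,
      ← Finset.add_sum_erase TAᶜ (fun k => dE G' i k) hjc]
    have h1 : dE G i j = 2 := dE_Gstar_BB hjs hi hb hne
    have h2 : (1:ℝ≥0∞) ≤ dE G' i j := one_le_dE _ hne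
    have h3 : ∀ k ∈ TAᶜ.erase j, dE G i k ≤ dE G' i k := by
      intro k hk
      obtain ⟨hkj, hkc⟩ := Finset.mem_erase.mp hk
      have hkB : k ∉ TA := Finset.mem_compl.mp hkc
      by_cases hik : i = k
      · subst hik; rw [dE_self, dE_self]
      · rw [dE_Gstar_BB hjs hi hkB hik]
        refine two_le_dE _ hik ?_
        rw [hG', addE, sup_adj, edge_adj]
        rintro (hGa | ⟨⟨-, h5⟩ | ⟨h5, -⟩, -⟩)
        · exact Gstar_not_adj_BB hjs hi hkB hGa
        · exact hkj h5
        · exact hne h5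
    calc dE G i j + ∑ k ∈ TAᶜ.erase j, dE G i k
        = 1 + ∑ k ∈ TAᶜ.erase j, dE G i k + 1 := by rw [h1]; ring
      _ ≤ dE G' i j + ∑ k ∈ TAᶜ.erase j, dE G' i k + 1 := by
          gcongr with k hk
          exact h3 k hk
  calc (degE G i : ℝ≥0∞) * ENNReal.ofReal cB + ENNReal.ofReal A * ∑ k ∈ TA, dE G i k
        + ∑ k ∈ TAᶜ, dE G i k + ENNReal.ofReal cB
      ≤ (degE G i : ℝ≥0∞) * ENNReal.ofReal cB + ENNReal.ofReal A * ∑ k ∈ TA, dE G' i k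
        + ((∑ k ∈ TAᶜ, dE G' i k) + 1) + ENNReal.ofReal cB := by gcongr
    _ = (degE G' i : ℝ≥0∞) * ENNReal.ofReal cB + ENNReal.ofReal A * ∑ k ∈ TA, dE G' i k
        + ∑ k ∈ TAᶜ, dE G' i k + ENNReal.ofReal 1 := by
        rw [hdeg, ENNReal.ofReal_one]; ring

/-- Assuming `1 < c_A ≤ c_B` and `c_A < A`, the star-over-clique graph
`G*` (T_A a clique, every type-B node adjacent to `jstar ∈ T_A` only) is pairwise stable. -/
theorem stmt5 (TA : Finset V) (A cA cB : ℝ)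
    (hA : 1 < A) (hcA : 1 < cA) (hAB : cA ≤ cB) (hcAA : cA < A)
    (jstar : V) (hjstar : jstar ∈ TA) :
    PairwiseStable TA A cA cB (Gstar TA jstar) := by
  constructor
  · intro i j hadj
    have hadj' := Gstar_adj_iff.mp hadj
    obtain ⟨hne, hcase⟩ := hadj'
    rcases hcase with ⟨hi, hj⟩ | ⟨hi, rfl⟩ | ⟨hj, rfl⟩
    · refine ⟨lemD1 hcA hcAA hjstar hi hj hne, ?_⟩
      rw [delE_comm]
      exact lemD1 hcA hcAA hjstar hj hi hne.symm
    · -- i ∉ TA, j = jstar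
      obtain ⟨h1, h2⟩ := lemD2 (A := A) (cA := cA) (cB := cB) hA hjstar hi
      rw [delE_comm]
      constructor
      · rw [h2]
        exact (cost_Gstar_ne_top TA A cA cB hjstar _).lt_top
      · rw [h1]
        exact (cost_Gstar_ne_top TA A cA cB hjstar _).lt_top
    · -- j ∉ TA, i = jstar
      obtain ⟨h1, h2⟩ := lemD2 (A := A) (cA := cA) (cB := cB) hA hjstar hj
      constructor
      · rw [h1]
        exact (cost_Gstar_ne_top TA A cA cB hjstar _).lt_top
      · rw [h2]
        exact (cost_Gstar_ne_top TA A cA cB hjstar _).lt_top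
  · intro i j hne hnadj
    by_cases hi : i ∈ TA <;> by_cases hj : j ∈ TA
    · exact absurd (Gstar_adj_iff.mpr ⟨hne, Or.inl ⟨hi, hj⟩⟩) hnadj
    · have hij : i ≠ jstar := by
        rintro rfl
        exact hnadj (Gstar_adj_iff.mpr ⟨hne, Or.inr (Or.inr ⟨hj, rfl⟩)⟩)
      exact Or.inl (lemA1 hcA hjstar hi hij hj)
    · have hji : j ≠ jstar := by
        rintro rfl
        exact hnadj (Gstar_adj_iff.mpr ⟨hne, Or.inr (Or.inl ⟨hi, rfl⟩)⟩)
      refine Or.inr ?_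
      rw [addE_comm]
      exact lemA1 hcA hjstar hj hji hi
    · exact Or.inl (lemA2 hcA hAB hjstar hi hj hne)

end
end

section
/- Assume c_A = c_B = c. Let G be a pairwise-stable connected graph on V, let i, j be vertices with d_G(i,j) = k + 1 for some integer k ≥ 1, and for vertices u, v define T_u(v) = { x ∈ V : d_G(u,x) = d_G(u,v) + d_G(v,x) } (the vertices having a shortest path from u passing through v). Then |T_i(j)| ≤ c/k or |T_j(i)| ≤ c/k. -/
open SimpleGraph Classical
open scoped ENNReal

noncomputable section

variable {V : Type*} [Fintype V] [DecidableEq V]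

omit [Fintype V] [DecidableEq V] in
lemma dist_mono_aux {G G' : SimpleGraph V} (h : G ≤ G') {u v : V} (hr : G.Reachable u v) :
    G'.dist u v ≤ G.dist u v := by
  obtain ⟨p, hp⟩ := hr.exists_walk_length_eq_dist
  calc G'.dist u v ≤ (p.mapLe h).length := SimpleGraph.dist_le _
    _ = p.length := Walk.length_map _ _
    _ = G.dist u v := hp

lemma sum_bound_aux {k : ℕ} (F : Finset V) (D D' : V → ℝ≥0∞)
    (h1 : ∀ x, D' x ≤ D x) (h2 : ∀ x ∈ F, D' x + k ≤ D x) (s : Finset V) :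
    ∑ x ∈ s, D' x + (k : ℝ≥0∞) * ((s ∩ F).card : ℝ≥0∞) ≤ ∑ x ∈ s, D x := by
  classical
  have hdisj : Disjoint (s ∩ F) (s \ F) := by
    rw [Finset.disjoint_left]
    intro a ha hb
    exact (Finset.mem_sdiff.1 hb).2 (Finset.mem_inter.1 ha).2
  have hu : s ∩ F ∪ s \ F = s := by
    ext a; simp only [Finset.mem_union, Finset.mem_inter, Finset.mem_sdiff]; tauto
  have e1 : ∀ t : V → ℝ≥0∞, ∑ x ∈ s, t x = ∑ x ∈ s ∩ F, t x + ∑ x ∈ s \ F, t x := by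
    intro t; rw [← hu, Finset.sum_union hdisj]; simp [hu]
  rw [e1 D', e1 D]
  have hcard : (k : ℝ≥0∞) * ((s ∩ F).card : ℝ≥0∞) = ∑ _x ∈ s ∩ F, (k : ℝ≥0∞) := by
    rw [Finset.sum_const, nsmul_eq_mul, mul_comm]
  calc ∑ x ∈ s ∩ F, D' x + ∑ x ∈ s \ F, D' x + (k : ℝ≥0∞) * ((s ∩ F).card : ℝ≥0∞)
      = ∑ x ∈ s ∩ F, (D' x + (k : ℝ≥0∞)) + ∑ x ∈ s \ F, D' x := by
        rw [hcard, Finset.sum_add_distrib]; ring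
    _ ≤ ∑ x ∈ s ∩ F, D x + ∑ x ∈ s \ F, D x := by
        gcongr with x hx x hx
        · exact h2 x (Finset.mem_inter.1 hx).2
        · exact h1 x



lemma key (TA : Finset V) (A c : ℝ) (hA : 1 ≤ A) (hc : 0 < c)
    (G : SimpleGraph V) (hconn : G.Connected) (i j : V) (k : ℕ) (hk : 1 ≤ k)
    (hd : G.dist i j = k + 1)
    (hst : cost TA A c c G i < cost TA A c c (addE G i j) i) :
    (Nat.card {x : V | G.dist i x = G.dist i j + G.dist j x} : ℝ) ≤ c / k := by
  classical
  have hij : i ≠ j := by rintro rfl; rw [SimpleGraph.dist_self] at hd; omega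
  have hnadj : ¬ G.Adj i j := by
    intro h
    have := (SimpleGraph.dist_eq_one_iff_adj (G := G)).2 h
    omega
  set G' := addE G i j with hG'
  have hle : G ≤ G' := le_sup_left
  have hconn' : G'.Connected := hconn.mono hle
  have hadj' : G'.Adj i j := by
    rw [hG', addE, sup_adj, edge_adj]; exact Or.inr ⟨Or.inl ⟨rfl, rfl⟩, hij⟩
  -- degree
  have hns : G'.neighborSet i = insert j (G.neighborSet i) := by
    ext x
    simp only [mem_neighborSet, hG', addE, sup_adj, edge_adj, Set.mem_insert_iff]
    aesop
  have hdeg : degE G' i = degE G i + 1 := by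
    rw [degE, degE, hns, Set.ncard_insert_of_notMem (by simpa using hnadj) (Set.toFinite _)]
  -- distances
  have hD : ∀ x, dE G i x = (G.dist i x : ℝ≥0∞) := fun x => if_pos (hconn i x)
  have hD' : ∀ x, dE G' i x = (G'.dist i x : ℝ≥0∞) := fun x => if_pos (hconn' i x)
  have h1 : ∀ x, dE G' i x ≤ dE G i x := by
    intro x; rw [hD, hD']
    exact_mod_cast dist_mono_aux hle (hconn i x)
  set S : Set V := {x : V | G.dist i x = G.dist i j + G.dist j x} with hS
  set F : Finset V := S.toFinset with hF
  have h2 : ∀ x ∈ F, dE G' i x + (k : ℝ≥0∞) ≤ dE G i x := by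
    intro x hx
    have hx' : G.dist i x = G.dist i j + G.dist j x := by
      rw [hF, Set.mem_toFinset] at hx; exact hx
    have t1 : G'.dist i x ≤ G'.dist i j + G'.dist j x := hconn'.dist_triangle
    have t2 : G'.dist i j = 1 := (SimpleGraph.dist_eq_one_iff_adj).2 hadj'
    have t3 : G'.dist j x ≤ G.dist j x := dist_mono_aux hle (hconn j x)
    have : G'.dist i x + k ≤ G.dist i x := by omega
    rw [hD, hD']
    exact_mod_cast this
  -- sum bound over TA and TAᶜ
  have hsumA := sum_bound_aux F (dE G i) (dE G' i) h1 h2 TA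
  have hsumB := sum_bound_aux F (dE G i) (dE G' i) h1 h2 TAᶜ
  have hcards : ((TA ∩ F).card : ℝ≥0∞) + ((TAᶜ ∩ F).card : ℝ≥0∞) = (F.card : ℝ≥0∞) := by
    have : (TA ∩ F).card + (TAᶜ ∩ F).card = F.card := by
      rw [← Finset.card_union_of_disjoint]
      · congr 1
        ext a
        simp only [Finset.mem_union, Finset.mem_inter, Finset.mem_compl]
        tauto
      · rw [Finset.disjoint_left]
        intro a ha hb
        exact (Finset.mem_compl.1 (Finset.mem_inter.1 hb).1) (Finset.mem_inter.1 ha).1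
    exact_mod_cast this
  set C : ℝ≥0∞ := ENNReal.ofReal c with hC
  set Aq : ℝ≥0∞ := ENNReal.ofReal A with hAq
  have hA1 : 1 ≤ Aq := ENNReal.one_le_ofReal.2 hA
  -- main inequality
  have main : cost TA A c c G' i + (k : ℝ≥0∞) * (F.card : ℝ≥0∞) ≤ cost TA A c c G i + C := by
    rw [cost, cost, hdeg, ite_self, Nat.cast_add, Nat.cast_one, add_mul, one_mul]
    rw [← hcards, mul_add]
    calc (degE G i : ℝ≥0∞) * C + C + Aq * ∑ x ∈ TA, dE G' i x + ∑ x ∈ TAᶜ, dE G' i x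
          + ((k : ℝ≥0∞) * ((TA ∩ F).card : ℝ≥0∞) + (k : ℝ≥0∞) * ((TAᶜ ∩ F).card : ℝ≥0∞))
        ≤ (degE G i : ℝ≥0∞) * C + C + (Aq * ∑ x ∈ TA, dE G' i x
            + Aq * ((k : ℝ≥0∞) * ((TA ∩ F).card : ℝ≥0∞)))
          + (∑ x ∈ TAᶜ, dE G' i x + (k : ℝ≥0∞) * ((TAᶜ ∩ F).card : ℝ≥0∞)) := by
          have : (k : ℝ≥0∞) * ((TA ∩ F).card : ℝ≥0∞)
              ≤ Aq * ((k : ℝ≥0∞) * ((TA ∩ F).card : ℝ≥0∞)) :=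
            le_mul_of_one_le_left zero_le hA1
          calc _ = ((degE G i : ℝ≥0∞) * C + C + (Aq * ∑ x ∈ TA, dE G' i x
                  + (k : ℝ≥0∞) * ((TA ∩ F).card : ℝ≥0∞))
                + (∑ x ∈ TAᶜ, dE G' i x + (k : ℝ≥0∞) * ((TAᶜ ∩ F).card : ℝ≥0∞))) := by ring
            _ ≤ _ := by gcongr
      _ ≤ (degE G i : ℝ≥0∞) * C + C + Aq * ∑ x ∈ TA, dE G i x + ∑ x ∈ TAᶜ, dE G i x := by
          rw [← mul_add]
          exact add_le_add (add_le_add le_rfl (mul_le_mul_right hsumA Aq)) hsumB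
      _ = (degE G i : ℝ≥0∞) * C + Aq * ∑ x ∈ TA, dE G i x + ∑ x ∈ TAᶜ, dE G i x + C := by
          ring
  -- finiteness of cost
  have hfin : cost TA A c c G i ≠ ⊤ := by
    rw [cost]
    refine ENNReal.add_ne_top.2 ⟨ENNReal.add_ne_top.2 ⟨?_, ?_⟩, ?_⟩
    · exact ENNReal.mul_ne_top (ENNReal.natCast_ne_top _) ENNReal.ofReal_ne_top
    · exact ENNReal.mul_ne_top ENNReal.ofReal_ne_top
        (ENNReal.sum_ne_top.2 fun x _ => by rw [hD]; exact ENNReal.natCast_ne_top _)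
    · exact ENNReal.sum_ne_top.2 fun x _ => by rw [hD]; exact ENNReal.natCast_ne_top _
  -- strict chain
  have hKfin : (k : ℝ≥0∞) * (F.card : ℝ≥0∞) ≠ ⊤ :=
    ENNReal.mul_ne_top (ENNReal.natCast_ne_top _) (ENNReal.natCast_ne_top _)
  have hstep : cost TA A c c G i + (k : ℝ≥0∞) * (F.card : ℝ≥0∞)
      < cost TA A c c G i + C :=
    lt_of_lt_of_le (ENNReal.add_lt_add_right hKfin hst) main
  have hlt : (k : ℝ≥0∞) * (F.card : ℝ≥0∞) < C := by
    rwa [ENNReal.add_lt_add_iff_left hfin] at hstep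
  have hreal : (k : ℝ) * (F.card : ℝ) < c := by
    have : ((k * F.card : ℕ) : ℝ≥0∞) < ENNReal.ofReal c := by
      rw [Nat.cast_mul]; exact hlt
    rw [← ENNReal.ofReal_natCast, ENNReal.ofReal_lt_ofReal_iff hc] at this
    push_cast at this
    exact this
  have hcardeq : (Nat.card S : ℝ) = (F.card : ℝ) := by
    rw [Nat.card_eq_card_toFinset]
  rw [hcardeq]
  have hkpos : (0 : ℝ) < k := by exact_mod_cast hk
  rw [le_div_iff₀ hkpos]
  nlinarith

/-- Assume `c_A = c_B = c`. Let `G` be pairwise stable and connected,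
let `d_G(i,j) = k + 1` with `k ≥ 1`, and for vertices `u, v` let
`T_u(v) = {x | d_G(u,x) = d_G(u,v) + d_G(v,x)}` be the set of vertices having a shortest
path from `u` passing through `v`. Then `|T_i(j)| ≤ c/k` or `|T_j(i)| ≤ c/k`. -/
theorem stmt10 (TA : Finset V) (A c : ℝ)
    (hA : 1 < A) (hc : 1 < c)
    (G : SimpleGraph V) (hconn : G.Connected)
    (hstable : PairwiseStable TA A c c G)
    (i j : V) (k : ℕ) (hk : 1 ≤ k) (hd : G.dist i j = k + 1) :
    (Nat.card {x : V | G.dist i x = G.dist i j + G.dist j x} : ℝ) ≤ c / k ∨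
    (Nat.card {x : V | G.dist j x = G.dist j i + G.dist i x} : ℝ) ≤ c / k := by
  have hc0 : (0 : ℝ) < c := by linarith
  have hij : i ≠ j := by rintro rfl; rw [SimpleGraph.dist_self] at hd; omega
  have hnadj : ¬ G.Adj i j := by
    intro h
    have := (SimpleGraph.dist_eq_one_iff_adj (G := G)).2 h
    omega
  rcases hstable.2 i j hij hnadj with h | h
  · exact Or.inl (key TA A c hA.le hc0 G hconn i j k hk hd h)
  · have hE : addE G i j = addE G j i := by
      rw [addE, addE]; congr 1; ext a b; rw [edge_adj, edge_adj]; tauto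
    rw [hE] at h
    have hd' : G.dist j i = k + 1 := by rw [SimpleGraph.dist_comm]; exact hd
    exact Or.inr (key TA A c hA.le hc0 G hconn j i k hk hd' h)

end
end

section
/- Assume 1 < c_A ≤ c_B, |T_A| ≥ 3 and T_B nonempty. Let G** be the graph on V in which T_A induces a complete graph, every node of T_B is adjacent to every node of T_A, and no two nodes of T_B are adjacent. Then for any x ∈ T_A and b ∈ T_B, C_rel(x, G** − xb) − C_rel(x, G**) = 1/2 − c_A < 0. Hence G**, which is the socially optimal topology under symmetric reliability requirements, is not pairwise stable under the reliable cost (δ = 1, τ = 1): the price of stability of the reliable game exceeds 1. -/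
open SimpleGraph Classical
open scoped ENNReal

noncomputable section

variable {V : Type*} [Fintype V] [DecidableEq V]

/-- `g_G(i,j)`: the minimum of `length p + length q` over pairs `(p, q)` of
edge-disjoint `i`–`j` paths (equivalently, the length of a shortest cycle through `i`
and `j`), with value `+∞` if no such pair exists. -/
def gdist (G : SimpleGraph V) (i j : V) : ℝ≥0∞ :=
  sInf {n : ℝ≥0∞ | ∃ p q : G.Path i j,
    (∀ e ∈ (p : G.Walk i j).edges, e ∉ (q : G.Walk i j).edges) ∧
    n = ((p : G.Walk i j).length : ℝ≥0∞) + ((q : G.Walk i j).length : ℝ≥0∞)}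

/-- The reliable cost of node `i` under symmetric reliability requirements (`τ = 1`)
with failure weight `δ = 1`. -/
def costRel (TA : Finset V) (A cA cB : ℝ) (G : SimpleGraph V) (i : V) : ℝ≥0∞ :=
  (degE G i : ℝ≥0∞) * ENNReal.ofReal (if i ∈ TA then cA else cB)
    + ENNReal.ofReal (A / 2) * ∑ j ∈ TA.erase i, gdist G i j
    + ENNReal.ofReal (1 / 2) * ∑ j ∈ TAᶜ.erase i, gdist G i j

/-- Pairwise stability for the reliable model: removing any present edge strictly
increases the reliable cost of both endpoints, and adding any absent edge strictly
increases the reliable cost of at least one endpoint. -/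
def PairwiseStableRel (TA : Finset V) (A cA cB : ℝ) (G : SimpleGraph V) : Prop :=
  (∀ i j : V, G.Adj i j →
    costRel TA A cA cB G i < costRel TA A cA cB (delE G i j) i ∧
    costRel TA A cA cB G j < costRel TA A cA cB (delE G i j) j) ∧
  (∀ i j : V, i ≠ j → ¬ G.Adj i j →
    costRel TA A cA cB G i < costRel TA A cA cB (addE G i j) i ∨
    costRel TA A cA cB G j < costRel TA A cA cB (addE G i j) j)

/-! ### Auxiliary lemmas -/

lemma walk_len_one {G : SimpleGraph V} {i j : V} (w : G.Walk i j) (h : w.length = 1) :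
    G.Adj i j ∧ w.edges = [s(i, j)] := by
  cases w with
  | nil => simp at h
  | cons hadj w' =>
    cases w' with
    | nil => exact ⟨hadj, by simp⟩
    | cons h2 w'' => simp [SimpleGraph.Walk.length_cons] at h

lemma walk_len_pos {G : SimpleGraph V} {i j : V} (hij : i ≠ j) (w : G.Walk i j) :
    1 ≤ w.length := by
  cases w with
  | nil => exact absurd rfl hij
  | cons _ _ => simp [SimpleGraph.Walk.length_cons]

/-- A path of length 2 through an intermediate vertex. -/
def path2 {G : SimpleGraph V} {i k j : V} (hik : G.Adj i k) (hkj : G.Adj k j)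
    (hij : i ≠ j) : G.Path i j :=
  ⟨SimpleGraph.Walk.cons hik (SimpleGraph.Walk.cons hkj SimpleGraph.Walk.nil), by
    have h1 := hik.ne
    have h2 := hkj.ne
    simp [SimpleGraph.Walk.isPath_def, hij, h1, h2]⟩

lemma gdist_eq_three {G : SimpleGraph V} {i j : V} (hij : G.Adj i j) {k : V}
    (hik : G.Adj i k) (hkj : G.Adj k j) : gdist G i j = 3 := by
  have hne := hij.ne
  have h1 := hik.ne
  have h2 := hkj.ne
  apply le_antisymm
  · apply sInf_le
    refine ⟨SimpleGraph.Path.singleton hij, path2 hik hkj hne, ?_, ?_⟩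
    · intro e he
      simp [SimpleGraph.Path.singleton] at he
      subst he
      simp [path2, Sym2.eq_iff]
      have := hne.symm; have := h1.symm; have := h2.symm
      tauto
    · simp [SimpleGraph.Path.singleton, path2]
      norm_num
  · apply le_sInf
    rintro n ⟨p, q, hdisj, rfl⟩
    have hp := walk_len_pos hne (p : G.Walk i j)
    have hq := walk_len_pos hne (q : G.Walk i j)
    have key : 3 ≤ (p : G.Walk i j).length + (q : G.Walk i j).length := by
      by_contra h
      have hp1 : (p : G.Walk i j).length = 1 := by omega
      have hq1 : (q : G.Walk i j).length = 1 := by omega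
      have ep := (walk_len_one _ hp1).2
      have eq' := (walk_len_one _ hq1).2
      exact hdisj s(i,j) (by simp [ep]) (by simp [eq'])
    exact_mod_cast key

lemma gdist_eq_four {G : SimpleGraph V} {i j : V} (hne : i ≠ j) (hnadj : ¬ G.Adj i j)
    {k k' : V} (hkk' : k ≠ k') (hik : G.Adj i k) (hkj : G.Adj k j)
    (hik' : G.Adj i k') (hk'j : G.Adj k' j) : gdist G i j = 4 := by
  have h1 := hik.ne
  have h2 := hkj.ne
  have h3 := hik'.ne
  have h4 := hk'j.ne
  apply le_antisymm
  · apply sInf_le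
    refine ⟨path2 hik hkj hne, path2 hik' hk'j hne, ?_, ?_⟩
    · intro e he
      simp [path2] at he ⊢
      have := hne.symm; have := h1.symm; have := h2.symm
      have := h3.symm; have := h4.symm; have := hkk'.symm
      rcases he with rfl | rfl <;> simp [Sym2.eq_iff] <;> tauto
    · simp [path2]
      norm_num
  · apply le_sInf
    rintro n ⟨p, q, hdisj, rfl⟩
    have hlen : ∀ w : G.Walk i j, 2 ≤ w.length := by
      intro w
      have hp := walk_len_pos hne w
      by_contra h
      have hw1 : w.length = 1 := by omega
      exact hnadj (walk_len_one w hw1).1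
    have key : 4 ≤ (p : G.Walk i j).length + (q : G.Walk i j).length := by
      have := hlen (p : G.Walk i j)
      have := hlen (q : G.Walk i j)
      omega
    exact_mod_cast key

lemma key_eq (TA : Finset V) (A cA cB : ℝ) (hTA : 3 ≤ TA.card)
    {x b : V} (hx : x ∈ TA) (hb : b ∉ TA) :
    costRel TA A cA cB (delE (Gss TA) x b) x + ENNReal.ofReal cA =
      costRel TA A cA cB (Gss TA) x + ENNReal.ofReal (1 / 2) := by
  classical
  have hxb : x ≠ b := fun h => hb (h ▸ hx)
  obtain ⟨k, hk, k', hk', hkk'⟩ : ∃ k ∈ TA.erase x, ∃ k' ∈ TA.erase x, k ≠ k' := by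
    apply Finset.one_lt_card.mp
    have := Finset.pred_card_le_card_erase (s := TA) (a := x)
    omega
  have hkTA : k ∈ TA := Finset.mem_of_mem_erase hk
  have hkx : k ≠ x := Finset.ne_of_mem_erase hk
  have hk'TA : k' ∈ TA := Finset.mem_of_mem_erase hk'
  have hk'x : k' ≠ x := Finset.ne_of_mem_erase hk'
  have hkb : k ≠ b := fun h => hb (h ▸ hkTA)
  have hk'b : k' ≠ b := fun h => hb (h ▸ hk'TA)
  have hG : ∀ u v : V, u ≠ v → u ∈ TA ∨ v ∈ TA → (Gss TA).Adj u v := by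
    intro u v h h'
    simp only [Gss, SimpleGraph.fromRel_adj]
    tauto
  have sne : ∀ u v : V, (u ≠ x ∨ v ≠ b) → (u ≠ b ∨ v ≠ x) → s(u, v) ≠ s(x, b) := by
    intro u v h1 h2 h
    rw [Sym2.eq_iff] at h
    tauto
  have hD : ∀ u v : V, (Gss TA).Adj u v → s(u, v) ≠ s(x, b) →
      (delE (Gss TA) x b).Adj u v := by
    intro u v h h'
    simp [delE, h, h']
  -- gdist values over TA
  have gA : ∀ j ∈ TA.erase x,
      gdist (Gss TA) x j = 3 ∧ gdist (delE (Gss TA) x b) x j = 3 := by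
    intro j hj
    have hjx : j ≠ x := Finset.ne_of_mem_erase hj
    have hjTA : j ∈ TA := Finset.mem_of_mem_erase hj
    have hjb : j ≠ b := fun h => hb (h ▸ hjTA)
    obtain ⟨m, hm⟩ : ((TA.erase x).erase j).Nonempty := by
      apply Finset.card_pos.mp
      have h1 := Finset.pred_card_le_card_erase (s := TA) (a := x)
      have h2 := Finset.pred_card_le_card_erase (s := TA.erase x) (a := j)
      omega
    have hmj : m ≠ j := Finset.ne_of_mem_erase hm
    have hmx : m ≠ x := Finset.ne_of_mem_erase (Finset.mem_of_mem_erase hm)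
    have hmTA : m ∈ TA := Finset.mem_of_mem_erase (Finset.mem_of_mem_erase hm)
    have hmb : m ≠ b := fun h => hb (h ▸ hmTA)
    have a1 : (Gss TA).Adj x j := hG x j hjx.symm (Or.inl hx)
    have a2 : (Gss TA).Adj x m := hG x m hmx.symm (Or.inl hx)
    have a3 : (Gss TA).Adj m j := hG m j hmj (Or.inl hmTA)
    exact ⟨gdist_eq_three a1 a2 a3,
      gdist_eq_three (hD _ _ a1 (sne _ _ (Or.inr hjb) (Or.inl hxb)))
        (hD _ _ a2 (sne _ _ (Or.inr hmb) (Or.inl hxb)))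
        (hD _ _ a3 (sne _ _ (Or.inl hmx) (Or.inl hmb)))⟩
  -- gdist values over TAᶜ
  have gB : ∀ j ∈ TAᶜ, gdist (Gss TA) x j = 3 := by
    intro j hj
    have hjTA : j ∉ TA := Finset.mem_compl.mp hj
    have hxj : x ≠ j := fun h => hjTA (h ▸ hx)
    have hkj : k ≠ j := fun h => hjTA (h ▸ hkTA)
    exact gdist_eq_three (hG x j hxj (Or.inl hx)) (hG x k hkx.symm (Or.inl hx))
      (hG k j hkj (Or.inl hkTA))
  have gB' : ∀ j ∈ TAᶜ.erase b, gdist (delE (Gss TA) x b) x j = 3 := by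
    intro j hj
    have hjb : j ≠ b := Finset.ne_of_mem_erase hj
    have hjTA : j ∉ TA := Finset.mem_compl.mp (Finset.mem_of_mem_erase hj)
    have hxj : x ≠ j := fun h => hjTA (h ▸ hx)
    have hkj : k ≠ j := fun h => hjTA (h ▸ hkTA)
    exact gdist_eq_three
      (hD _ _ (hG x j hxj (Or.inl hx)) (sne _ _ (Or.inr hjb) (Or.inl hxb)))
      (hD _ _ (hG x k hkx.symm (Or.inl hx)) (sne _ _ (Or.inr hkb) (Or.inl hxb)))
      (hD _ _ (hG k j hkj (Or.inl hkTA)) (sne _ _ (Or.inl hkx) (Or.inl hkb)))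
  have gBb : gdist (delE (Gss TA) x b) x b = 4 := by
    refine gdist_eq_four hxb ?_ hkk' ?_ ?_ ?_ ?_
    · simp [delE]
    · exact hD _ _ (hG x k hkx.symm (Or.inl hx)) (sne _ _ (Or.inr hkb) (Or.inl hxb))
    · exact hD _ _ (hG k b hkb (Or.inl hkTA)) (sne _ _ (Or.inl hkx) (Or.inl hkb))
    · exact hD _ _ (hG x k' hk'x.symm (Or.inl hx)) (sne _ _ (Or.inr hk'b) (Or.inl hxb))
    · exact hD _ _ (hG k' b hk'b (Or.inl hk'TA)) (sne _ _ (Or.inl hk'x) (Or.inl hk'b))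
  -- the degree
  have e1 : (delE (Gss TA) x b).neighborSet x = (Gss TA).neighborSet x \ {b} := by
    ext v
    simp only [SimpleGraph.mem_neighborSet, delE, SimpleGraph.deleteEdges_adj,
      Set.mem_singleton_iff, Set.mem_diff, Sym2.eq_iff]
    have := hxb
    tauto
  have hbmem : b ∈ (Gss TA).neighborSet x := hG x b hxb (Or.inl hx)
  have hdeg : degE (Gss TA) x = degE (delE (Gss TA) x b) x + 1 := by
    rw [degE, degE, e1]
    exact (Set.ncard_diff_singleton_add_one hbmem (Set.toFinite _)).symm
  -- assemble
  have hxc : x ∉ TAᶜ := by simp [hx]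
  have hbc : b ∈ TAᶜ := Finset.mem_compl.mpr hb
  rw [costRel, costRel, if_pos hx,
    Finset.erase_eq_of_notMem hxc,
    Finset.sum_congr rfl (fun j hj => (gA j hj).1),
    Finset.sum_congr rfl (fun j hj => (gA j hj).2),
    ← Finset.add_sum_erase _ (gdist (Gss TA) x) hbc,
    ← Finset.add_sum_erase _ (gdist (delE (Gss TA) x b) x) hbc,
    gBb, gB b hbc,
    Finset.sum_congr rfl gB',
    Finset.sum_congr rfl (fun j hj => gB j (Finset.mem_of_mem_erase hj)),
    hdeg]
  push_cast
  have h4 : (4 : ℝ≥0∞) = 3 + 1 := by norm_num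
  rw [h4]
  ring


/-- Assume `1 < c_A ≤ c_B`, `|T_A| ≥ 3` and `T_B` nonempty. For any
`x ∈ T_A` and `b ∈ T_B`, removing the edge `xb` from `G**` changes the reliable cost of
`x` by `1/2 - c_A < 0` (stated additively). Hence `G**`, the socially optimal topology
under symmetric reliability requirements, is not pairwise stable under the reliable
cost (`δ = 1`, `τ = 1`). -/
theorem stmt15 (TA : Finset V) (A cA cB : ℝ)
    (hA : 1 < A) (hcA : 1 < cA) (hAB : cA ≤ cB)
    (hTA : 3 ≤ TA.card) (hTB : TAᶜ.Nonempty) :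
    (∀ x ∈ TA, ∀ b ∉ TA,
      costRel TA A cA cB (delE (Gss TA) x b) x + ENNReal.ofReal cA =
        costRel TA A cA cB (Gss TA) x + ENNReal.ofReal (1 / 2)) ∧
    (1 / 2 - cA < 0) ∧
    ¬ PairwiseStableRel TA A cA cB (Gss TA) := by
  refine ⟨fun x hx b hb => key_eq TA A cA cB hTA hx hb, by linarith, ?_⟩
  rintro ⟨hdel, -⟩
  obtain ⟨x, hx⟩ := Finset.card_pos.mp (show 0 < TA.card by omega)
  obtain ⟨b, hbc⟩ := hTB
  have hb : b ∉ TA := Finset.mem_compl.mp hbc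
  have hxb : x ≠ b := fun h => hb (h ▸ hx)
  have hadj : (Gss TA).Adj x b := by
    simp only [Gss, SimpleGraph.fromRel_adj]
    tauto
  have h1 := (hdel x b hadj).1
  have hk := key_eq TA A cA cB hTA hx hb
  have hlt : costRel TA A cA cB (Gss TA) x + ENNReal.ofReal cA
      < costRel TA A cA cB (delE (Gss TA) x b) x + ENNReal.ofReal cA :=
    ENNReal.add_lt_add_right ENNReal.ofReal_ne_top h1
  rw [hk] at hlt
  exact absurd hlt (not_lt.mpr (add_le_add le_rfl (ENNReal.ofReal_le_ofReal (by linarith))))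

end
end
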